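/- Let n ≥ 10 be a power of two and b ≥ 5. Then the size of the balanced set Bal(n,b) satisfies log_2 |Bal(n,b)| ≥ n + log_2(1 − 2·n^{2 − (2/9)b^2·log_2 e}); in particular log_2 |Bal(n,b)| ≥ n − 1. -/

import Mathlib

open Finset

/-- all lists of booleans of length `n` -/
noncomputable def allB (n : ℕ) : Finset (List Bool) :=
  (Finset.univ : Finset (Fin n → Bool)).image List.ofFn

lemma mem_allB {n : ℕ} {l : List Bool} : l ∈ allB n ↔ l.length = n := by
  constructor
  · rintro h
    simp only [allB, Finset.mem_image] at h
    obtain ⟨f, -, rfl⟩ := h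
    simp
  · intro h
    subst h
    simp only [allB, Finset.mem_image]
    exact ⟨l.get ∘ Fin.cast (by simp), Finset.mem_univ _, by simp [List.ofFn_getElem]⟩

lemma card_allB (n : ℕ) : (allB n).card = 2 ^ n := by
  rw [allB, Finset.card_image_of_injective _ List.ofFn_injective, Finset.card_univ]
  simp

lemma count_ofFn {n : ℕ} (f : Fin n → Bool) :
    (List.ofFn f).count true = (Finset.univ.filter (fun i => f i = true)).card := by
  induction n with
  | zero => simp
  | succ m ih =>
    rw [List.ofFn_succ, List.count_cons, ih (fun i => f i.succ), Finset.card_filter,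
      Finset.card_filter, Fin.sum_univ_succ]
    simp [add_comm]

lemma card_count_eq (B k : ℕ) :
    ((allB B).filter (fun l => l.count true = k)).card = B.choose k := by
  classical
  rw [allB, Finset.filter_image, Finset.card_image_of_injective _ List.ofFn_injective]
  have : ∀ f : Fin B → Bool, (List.ofFn f).count true = k ↔
      (Finset.univ.filter (fun i => f i = true)).card = k := by
    intro f; rw [count_ofFn]
  rw [Finset.filter_congr (fun f _ => by rw [this f])]
  have hcard : ((Finset.univ : Finset (Fin B)).powersetCard k).card = B.choose k := by
    rw [Finset.card_powersetCard, Finset.card_univ, Fintype.card_fin]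
  rw [← hcard]
  apply Finset.card_bij (fun f _ => Finset.univ.filter (fun i => f i = true))
  · intro f hf
    rw [Finset.mem_powersetCard]
    exact ⟨Finset.filter_subset _ _, (Finset.mem_filter.mp hf).2⟩
  · intro f hf g hg h
    funext i
    have hiff : f i = true ↔ g i = true := by
      have := Finset.ext_iff.mp h i
      simpa using this
    cases hfi : f i <;> cases hgi : g i <;> simp_all
  · intro s hs
    rw [Finset.mem_powersetCard] at hs
    refine ⟨fun i => i ∈ s, ?_, ?_⟩
    · simp [Finset.mem_filter, hs.2]
    · ext i; simp



lemma card_filter_count (B : ℕ) (P : ℕ → Prop) [DecidablePred P] :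
    ((allB B).filter (fun l => P (l.count true))).card
      = ∑ k ∈ (Finset.range (B+1)).filter P, B.choose k := by
  classical
  rw [Finset.card_eq_sum_card_fiberwise (f := fun l => l.count true)
      (t := (Finset.range (B+1)).filter P) ?_]
  · apply Finset.sum_congr rfl
    intro k hk
    rw [← card_count_eq B k]
    congr 1
    ext l
    simp only [Finset.mem_filter] at *
    constructor
    · rintro ⟨⟨h1, _⟩, h3⟩; exact ⟨h1, h3⟩
    · rintro ⟨h1, h3⟩; exact ⟨⟨h1, h3 ▸ hk.2⟩, h3⟩
  · intro l hl
    rw [Finset.mem_coe, Finset.mem_filter] at hl ⊢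
    refine ⟨Finset.mem_range.mpr ?_, hl.2⟩
    show l.count true < B + 1
    have h1 : l.count true ≤ l.length := List.count_le_length
    have h2 : l.length = B := mem_allB.mp hl.1
    omega

lemma tail_core (B : ℕ) (hB : 1 ≤ B) (t : ℝ) (ht : 0 ≤ t) (w : ℕ → ℝ)
    (P : ℕ → Prop) [DecidablePred P]
    (hsum : ∀ s : ℝ, ∑ k ∈ Finset.range (B+1), (B.choose k : ℝ) * Real.exp (s * w k)
        = (1 + Real.exp s) ^ B)
    (hP : ∀ k, P k → (B:ℝ)/2 + t ≤ w k) :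
    (∑ k ∈ (Finset.range (B+1)).filter P, (B.choose k : ℝ))
      ≤ 2 ^ B * Real.exp (-2 * t^2 / B) := by
  have hBpos : (0:ℝ) < B := by exact_mod_cast hB
  set s : ℝ := 4 * t / B with hs
  have hs0 : 0 ≤ s := by positivity
  have step1 : (∑ k ∈ (Finset.range (B+1)).filter P, (B.choose k : ℝ))
      ≤ Real.exp (-(s * ((B:ℝ)/2 + t))) * ∑ k ∈ Finset.range (B+1),
          (B.choose k : ℝ) * Real.exp (s * w k) := by
    rw [Finset.mul_sum]
    calc (∑ k ∈ (Finset.range (B+1)).filter P, (B.choose k : ℝ))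
        ≤ ∑ k ∈ (Finset.range (B+1)).filter P,
            Real.exp (-(s * ((B:ℝ)/2 + t))) * ((B.choose k : ℝ) * Real.exp (s * w k)) := by
          apply Finset.sum_le_sum
          intro k hk
          have hwk := hP k (Finset.mem_filter.mp hk).2
          have : (1:ℝ) ≤ Real.exp (-(s * ((B:ℝ)/2 + t))) * Real.exp (s * w k) := by
            rw [← Real.exp_add]
            rw [show -(s * ((B:ℝ)/2 + t)) + s * w k = s * (w k - ((B:ℝ)/2 + t)) by ring]
            have : 0 ≤ s * (w k - ((B:ℝ)/2 + t)) := by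
              apply mul_nonneg hs0; linarith
            exact Real.one_le_exp this
          nlinarith [(by positivity : (0:ℝ) ≤ (B.choose k : ℝ)), Real.exp_pos (-(s * ((B:ℝ)/2 + t))),
            Real.exp_pos (s * w k)]
      _ ≤ ∑ k ∈ Finset.range (B+1),
            Real.exp (-(s * ((B:ℝ)/2 + t))) * ((B.choose k : ℝ) * Real.exp (s * w k)) := by
          apply Finset.sum_le_sum_of_subset_of_nonneg (Finset.filter_subset _ _)
          intro k _ _
          positivity
  rw [hsum s] at step1
  have step2 : (1 + Real.exp s) ^ B ≤ (2:ℝ)^B * Real.exp ((B:ℝ) * (s/2 + s^2/8)) := by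
    have h1 : 1 + Real.exp s = 2 * Real.exp (s/2) * Real.cosh (s/2) := by
      rw [Real.cosh_eq]
      have e1 : Real.exp (s/2) * Real.exp (s/2) = Real.exp s := by
        rw [← Real.exp_add]; ring_nf
      have e2 : Real.exp (s/2) * Real.exp (-(s/2)) = 1 := by
        rw [← Real.exp_add]; simp
      nlinarith [e1, e2]
    have h2 : Real.cosh (s/2) ≤ Real.exp ((s/2)^2/2) := Real.cosh_le_exp_half_sq _
    have h3 : 1 + Real.exp s ≤ 2 * Real.exp (s/2 + s^2/8) := by
      rw [h1]
      calc 2 * Real.exp (s/2) * Real.cosh (s/2) ≤ 2 * Real.exp (s/2) * Real.exp ((s/2)^2/2) := by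
            apply mul_le_mul_of_nonneg_left h2; positivity
        _ = 2 * Real.exp (s/2 + s^2/8) := by rw [mul_assoc, ← Real.exp_add]; ring_nf
    calc (1 + Real.exp s) ^ B ≤ (2 * Real.exp (s/2 + s^2/8)) ^ B := by
          apply pow_le_pow_left₀ (by positivity) h3
      _ = (2:ℝ)^B * Real.exp ((B:ℝ) * (s/2 + s^2/8)) := by
          rw [mul_pow, ← Real.exp_nat_mul]
  calc (∑ k ∈ (Finset.range (B+1)).filter P, (B.choose k : ℝ))
      ≤ Real.exp (-(s * ((B:ℝ)/2 + t))) * ((2:ℝ)^B * Real.exp ((B:ℝ) * (s/2 + s^2/8))) := by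
        refine le_trans step1 ?_
        apply mul_le_mul_of_nonneg_left step2 (le_of_lt (Real.exp_pos _))
    _ = (2:ℝ)^B * Real.exp (-(s * ((B:ℝ)/2 + t)) + (B:ℝ) * (s/2 + s^2/8)) := by
        rw [Real.exp_add]; ring
    _ ≤ 2 ^ B * Real.exp (-2 * t^2 / B) := by
        apply mul_le_mul_of_nonneg_left _ (by positivity)
        apply Real.exp_le_exp.mpr
        rw [hs]
        have : -(4 * t / ↑B * (↑B / 2 + t)) + ↑B * (4 * t / ↑B / 2 + (4 * t / ↑B) ^ 2 / 8)
            = -2 * t^2 / B := by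
          field_simp
          ring
        linarith [this.le]


lemma hsum_id (B : ℕ) (s : ℝ) :
    ∑ k ∈ Finset.range (B+1), (B.choose k : ℝ) * Real.exp (s * (k:ℝ)) = (1 + Real.exp s) ^ B := by
  rw [show (1:ℝ) + Real.exp s = Real.exp s + 1 by ring, add_pow]
  apply Finset.sum_congr rfl
  intro k _
  rw [one_pow, ← Real.exp_nat_mul, mul_comm (k:ℝ) s]
  ring

lemma hsum_rev (B : ℕ) (s : ℝ) :
    ∑ k ∈ Finset.range (B+1), (B.choose k : ℝ) * Real.exp (s * ((B:ℝ) - (k:ℝ)))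
      = (1 + Real.exp s) ^ B := by
  rw [add_pow]
  apply Finset.sum_congr rfl
  intro k hk
  have hkB : k ≤ B := by
    have := Finset.mem_range.mp hk; omega
  rw [one_pow, one_mul, ← Real.exp_nat_mul]
  have : ((B - k : ℕ) : ℝ) = (B:ℝ) - (k:ℝ) := by
    push_cast [hkB]; ring
  rw [this, mul_comm ((B:ℝ) - (k:ℝ)) s]
  ring

lemma window_bad_card (B : ℕ) (hB : 1 ≤ B) (t : ℝ) (ht : 0 ≤ t) :
    ((((allB B).filter (fun l => ¬((B:ℝ)/2 - t < (l.count true : ℝ) ∧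
        (l.count true : ℝ) < (B:ℝ)/2 + t))).card : ℝ))
      ≤ 2 * (2 ^ B * Real.exp (-2 * t^2 / B)) := by
  classical
  have key : ∀ (P : ℕ → Prop) (_ : DecidablePred P) (w : ℕ → ℝ),
      (∀ s : ℝ, ∑ k ∈ Finset.range (B+1), (B.choose k : ℝ) * Real.exp (s * w k)
        = (1 + Real.exp s) ^ B) →
      (∀ k, P k → (B:ℝ)/2 + t ≤ w k) →
      (((allB B).filter (fun l => P (l.count true))).card : ℝ)
        ≤ 2 ^ B * Real.exp (-2 * t^2 / B) := by
    intro P hdec w hsum hP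
    rw [card_filter_count B P]
    rw [Nat.cast_sum]
    exact tail_core B hB t ht w P hsum hP
  have h1 := key (fun k => (B:ℝ)/2 + t ≤ (k:ℝ)) (Classical.decPred _) (fun k => (k:ℝ))
    (hsum_id B) (fun k hk => hk)
  have h2 := key (fun k => (k:ℝ) ≤ (B:ℝ)/2 - t) (Classical.decPred _)
    (fun k => (B:ℝ) - (k:ℝ)) (hsum_rev B) (fun k hk => by linarith)
  have hsub : ((allB B).filter (fun l => ¬((B:ℝ)/2 - t < (l.count true : ℝ) ∧
        (l.count true : ℝ) < (B:ℝ)/2 + t)))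
      ⊆ ((allB B).filter (fun l => ((l.count true : ℝ)) ≤ (B:ℝ)/2 - t))
        ∪ ((allB B).filter (fun l => (B:ℝ)/2 + t ≤ (l.count true : ℝ))) := by
    intro l hl
    rw [Finset.mem_filter] at hl
    rw [Finset.mem_union, Finset.mem_filter, Finset.mem_filter]
    rcases not_and_or.mp hl.2 with h | h
    · exact Or.inl ⟨hl.1, by linarith [not_lt.mp h]⟩
    · exact Or.inr ⟨hl.1, by linarith [not_lt.mp h]⟩
  calc ((((allB B).filter (fun l => ¬((B:ℝ)/2 - t < (l.count true : ℝ) ∧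
        (l.count true : ℝ) < (B:ℝ)/2 + t))).card : ℝ))
      ≤ ((((allB B).filter (fun l => ((l.count true : ℝ)) ≤ (B:ℝ)/2 - t))
          ∪ ((allB B).filter (fun l => (B:ℝ)/2 + t ≤ (l.count true : ℝ)))).card : ℝ) := by
        exact_mod_cast Nat.cast_le.mpr (Finset.card_le_card hsub)
    _ ≤ (((allB B).filter (fun l => ((l.count true : ℝ)) ≤ (B:ℝ)/2 - t)).card : ℝ)
          + (((allB B).filter (fun l => (B:ℝ)/2 + t ≤ (l.count true : ℝ))).card : ℝ) := by
        exact_mod_cast Nat.cast_le.mpr (Finset.card_union_le _ _)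
    _ ≤ (2 ^ B * Real.exp (-2 * t^2 / B)) + (2 ^ B * Real.exp (-2 * t^2 / B)) := by
        exact add_le_add h2 h1
    _ = 2 * (2 ^ B * Real.exp (-2 * t^2 / B)) := by ring

lemma splice (n B j : ℕ) (hjB : j + B ≤ n) (p : List Bool → Prop) [DecidablePred p] :
    ((allB n).filter (fun x => p ((x.drop j).take B))).card
      ≤ 2 ^ (n - B) * ((allB B).filter p).card := by
  classical
  have hinj : ∀ x ∈ (allB n).filter (fun x => p ((x.drop j).take B)),
      x = x.take j ++ ((x.drop j).take B ++ x.drop (j+B)) := by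
    intro x _
    have h1 : x.drop (j+B) = (x.drop j).drop B := by
      rw [List.drop_drop]
    rw [h1, List.take_append_drop, List.take_append_drop]
  have hcard : ((allB n).filter (fun x => p ((x.drop j).take B))).card
      ≤ ((allB j) ×ˢ (((allB B).filter p) ×ˢ (allB (n - (j+B))))).card := by
    apply Finset.card_le_card_of_injOn
      (fun x => (x.take j, ((x.drop j).take B, x.drop (j+B))))
    · intro x hx
      rw [Finset.mem_coe, Finset.mem_filter] at hx
      have hlen : x.length = n := mem_allB.mp hx.1
      rw [Finset.mem_coe, Finset.mem_product, Finset.mem_product]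
      refine ⟨?_, ⟨?_, ?_⟩⟩
      · rw [mem_allB, List.length_take, hlen]; omega
      · rw [Finset.mem_filter, mem_allB, List.length_take, List.length_drop, hlen]
        exact ⟨by omega, hx.2⟩
      · rw [mem_allB, List.length_drop, hlen]
    · intro x hx y hy hxy
      simp only [Prod.mk.injEq] at hxy
      rw [hinj x hx, hinj y hy, hxy.1, hxy.2.1, hxy.2.2]
  calc ((allB n).filter (fun x => p ((x.drop j).take B))).card
      ≤ _ := hcard
    _ = 2 ^ j * (((allB B).filter p).card * 2 ^ (n - (j+B))) := by
        rw [Finset.card_product, Finset.card_product, card_allB, card_allB]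
    _ ≤ 2 ^ (n - B) * ((allB B).filter p).card := by
        rw [show 2 ^ (n - B) = 2 ^ j * 2 ^ (n - (j+B)) by rw [← pow_add]; congr 1; omega]
        ring_nf
        omega


/-- Membership in the balanced set Bal(n,b): every window of length
`B ≥ b⁴·log₂ n` has weight strictly between `B/2 − B/(3b)` and `B/2 + B/(3b)`. -/
def memBal (n b : ℕ) (x : List Bool) : Prop :=
  x.length = n ∧
  ∀ B j : ℕ, B ≤ n → ((b : ℝ) ^ 4 * Real.logb 2 n ≤ (B : ℝ)) → j + B ≤ n →
    ((B : ℝ) / 2 - (B : ℝ) / (3 * b) < (((x.drop j).take B).count true : ℝ) ∧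
     (((x.drop j).take B).count true : ℝ) < (B : ℝ) / 2 + (B : ℝ) / (3 * b))

set_option maxHeartbeats 2000000 in
theorem bal_size_lower_bound (n b : ℕ) (hn : 10 ≤ n) (hpow : ∃ m : ℕ, n = 2 ^ m)
    (hb : 5 ≤ b) :
    (n : ℝ) + Real.logb 2
        (1 - 2 * (n : ℝ) ^ ((2 : ℝ) - (2 / 9) * (b : ℝ) ^ 2 * Real.logb 2 (Real.exp 1)))
      ≤ Real.logb 2 ({x : List Bool | memBal n b x}.ncard : ℝ) ∧
    (n : ℝ) - 1 ≤ Real.logb 2 ({x : List Bool | memBal n b x}.ncard : ℝ) := by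
  classical
  set c0 : ℝ := (2 / 9) * (b : ℝ) ^ 2 * Real.logb 2 (Real.exp 1) with hc0
  have hn1 : (1:ℝ) < n := by
    have : (10:ℝ) ≤ n := by exact_mod_cast hn
    linarith
  have hnpos : (0:ℝ) < n := by linarith
  have hLpos : 0 < Real.logb 2 n := Real.logb_pos (by norm_num) hn1
  have hbpos : (0:ℝ) < b := by
    have : (5:ℝ) ≤ b := by exact_mod_cast hb
    linarith
  have hlog2pos : 0 < Real.log 2 := Real.log_pos (by norm_num)
  have hlogbe : Real.logb 2 (Real.exp 1) = 1 / Real.log 2 := by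
    rw [Real.logb, Real.log_exp]
  -- the good set as a finset
  set Q : List Bool → Prop := fun x =>
    ∀ B j : ℕ, B ≤ n → ((b : ℝ) ^ 4 * Real.logb 2 n ≤ (B : ℝ)) → j + B ≤ n →
      ((B : ℝ) / 2 - (B : ℝ) / (3 * b) < (((x.drop j).take B).count true : ℝ) ∧
       (((x.drop j).take B).count true : ℝ) < (B : ℝ) / 2 + (B : ℝ) / (3 * b)) with hQ
  have hset : {x : List Bool | memBal n b x} = ↑((allB n).filter Q) := by
    ext x
    simp only [Set.mem_setOf_eq, Finset.coe_filter, memBal, Set.mem_setOf_eq, mem_allB, hQ]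
  rw [hset, Set.ncard_coe_finset]
  set G := (allB n).filter Q with hG
  set Bad := (allB n).filter (fun x => ¬ Q x) with hBad
  have hsplit : G.card + Bad.card = 2 ^ n := by
    rw [hG, hBad, Finset.card_filter_add_card_filter_not, card_allB]
  -- bad pairs
  set badBJ : ℕ → ℕ → Finset (List Bool) := fun B j => (allB n).filter (fun x =>
    ((b : ℝ) ^ 4 * Real.logb 2 n ≤ (B : ℝ)) ∧ j + B ≤ n ∧
    ¬((B : ℝ) / 2 - (B : ℝ) / (3 * b) < (((x.drop j).take B).count true : ℝ) ∧
      (((x.drop j).take B).count true : ℝ) < (B : ℝ) / 2 + (B : ℝ) / (3 * b))) with hbadBJ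
  set pairs := (Finset.Icc 1 n) ×ˢ (Finset.range n) with hpairs
  have hBadsub : Bad ⊆ pairs.biUnion (fun q => badBJ q.1 q.2) := by
    intro x hx
    rw [hBad, Finset.mem_filter] at hx
    obtain ⟨hx1, hx2⟩ := hx
    replace hx2 : ¬ ∀ B j : ℕ, B ≤ n → ((b : ℝ) ^ 4 * Real.logb 2 n ≤ (B : ℝ)) → j + B ≤ n →
      ((B : ℝ) / 2 - (B : ℝ) / (3 * b) < (((x.drop j).take B).count true : ℝ) ∧
       (((x.drop j).take B).count true : ℝ) < (B : ℝ) / 2 + (B : ℝ) / (3 * b)) := hx2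
    push_neg at hx2
    obtain ⟨B, j, hBn, hcon, hjB, hbad⟩ := hx2
    have hB1 : 1 ≤ B := by
      by_contra h
      push_neg at h
      interval_cases B
      have : (0:ℝ) < (b:ℝ)^4 * Real.logb 2 n := by positivity
      simp at hcon
      linarith
    rw [Finset.mem_biUnion]
    refine ⟨(B, j), ?_, ?_⟩
    · rw [hpairs, Finset.mem_product, Finset.mem_Icc, Finset.mem_range]
      exact ⟨⟨hB1, hBn⟩, by omega⟩
    · rw [hbadBJ, Finset.mem_filter]
      refine ⟨hx1, hcon, hjB, ?_⟩
      intro hcontra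
      exact absurd hcontra.2 (not_lt.mpr (hbad hcontra.1))
  -- per-pair bound
  have hpair : ∀ B j : ℕ, ((badBJ B j).card : ℝ) ≤ 2 ^ n * (2 * (n:ℝ) ^ (-c0)) := by
    intro B j
    by_cases hc : ((b : ℝ) ^ 4 * Real.logb 2 n ≤ (B : ℝ)) ∧ j + B ≤ n
    · obtain ⟨hcon, hjB⟩ := hc
      have hB1 : 1 ≤ B := by
        by_contra h
        push_neg at h
        interval_cases B
        have : (0:ℝ) < (b:ℝ)^4 * Real.logb 2 n := by positivity
        simp at hcon
        linarith
      have hBn : B ≤ n := by omega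
      set t : ℝ := (B:ℝ) / (3 * b) with htdef
      have ht : 0 ≤ t := by positivity
      have heq : badBJ B j = (allB n).filter (fun x =>
          (fun l => ¬((B : ℝ) / 2 - t < (l.count true : ℝ) ∧
            (l.count true : ℝ) < (B : ℝ) / 2 + t)) ((x.drop j).take B)) := by
        rw [hbadBJ]
        apply Finset.filter_congr
        intro x _
        simp only [hcon, hjB, true_and, htdef]
      rw [heq]
      have hsp := splice n B j hjB (fun l => ¬((B : ℝ) / 2 - t < (l.count true : ℝ) ∧
            (l.count true : ℝ) < (B : ℝ) / 2 + t))
      have hwin := window_bad_card B hB1 t ht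
      have hBpos : (0:ℝ) < B := by exact_mod_cast hB1
      calc (((allB n).filter (fun x =>
          (fun l => ¬((B : ℝ) / 2 - t < (l.count true : ℝ) ∧
            (l.count true : ℝ) < (B : ℝ) / 2 + t)) ((x.drop j).take B))).card : ℝ)
          ≤ (2:ℝ) ^ (n - B) * (((allB B).filter (fun l => ¬((B : ℝ) / 2 - t < (l.count true : ℝ) ∧
            (l.count true : ℝ) < (B : ℝ) / 2 + t))).card : ℝ) := by
            exact_mod_cast Nat.cast_le.mpr hsp
        _ ≤ (2:ℝ) ^ (n - B) * (2 * (2 ^ B * Real.exp (-2 * t^2 / B))) := by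
            apply mul_le_mul_of_nonneg_left hwin (by positivity)
        _ = 2 ^ n * (2 * Real.exp (-2 * t^2 / B)) := by
            rw [show (2:ℝ) ^ n = (2:ℝ) ^ (n - B) * 2 ^ B by
              rw [← pow_add]; congr 1; omega]
            ring
        _ ≤ 2 ^ n * (2 * (n:ℝ) ^ (-c0)) := by
            apply mul_le_mul_of_nonneg_left _ (by positivity)
            apply mul_le_mul_of_nonneg_left _ (by norm_num)
            have hexp : -2 * t^2 / B = -(2 * B / (9 * b^2)) := by
              rw [htdef]
              field_simp
              ring
            have hrpow : (n:ℝ) ^ (-c0) = Real.exp (-((2/9) * (b:ℝ)^2 * Real.logb 2 n)) := by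
              rw [Real.rpow_def_of_pos hnpos, hc0, hlogbe, Real.logb]
              congr 1
              field_simp
            rw [hexp, hrpow]
            apply Real.exp_le_exp.mpr
            rw [neg_le_neg_iff, le_div_iff₀ (by positivity : (0:ℝ) < 9 * (b:ℝ)^2)]
            nlinarith [hcon, hLpos, hbpos]
    · have : badBJ B j = ∅ := by
        rw [hbadBJ]
        apply Finset.filter_false_of_mem
        intro x _
        intro hcontra
        exact hc ⟨hcontra.1, hcontra.2.1⟩
      rw [this]
      simp only [Finset.card_empty, Nat.cast_zero]
      positivity
  -- union bound
  have hBadcard : (Bad.card : ℝ) ≤ 2 ^ n * (2 * (n:ℝ) ^ ((2:ℝ) - c0)) := by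
    have h1 : (Bad.card : ℝ) ≤ ∑ q ∈ pairs, ((badBJ q.1 q.2).card : ℝ) := by
      have := Finset.card_le_card hBadsub
      have h2 := Finset.card_biUnion_le (s := pairs) (t := fun q => badBJ q.1 q.2)
      have : Bad.card ≤ ∑ q ∈ pairs, (badBJ q.1 q.2).card := le_trans this h2
      exact_mod_cast Nat.cast_le.mpr this
    have h2 : ∑ q ∈ pairs, ((badBJ q.1 q.2).card : ℝ)
        ≤ ∑ _q ∈ pairs, (2:ℝ) ^ n * (2 * (n:ℝ) ^ (-c0)) :=
      Finset.sum_le_sum (fun q _ => hpair q.1 q.2)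
    have h3 : ∑ _q ∈ pairs, (2:ℝ) ^ n * (2 * (n:ℝ) ^ (-c0))
        = (pairs.card : ℝ) * ((2:ℝ) ^ n * (2 * (n:ℝ) ^ (-c0))) := by
      rw [Finset.sum_const, nsmul_eq_mul]
    have h4 : (pairs.card : ℝ) ≤ (n:ℝ) ^ 2 := by
      rw [hpairs, Finset.card_product, Finset.card_range, Nat.card_Icc,
        show n + 1 - 1 = n from by omega]
      push_cast
      nlinarith [hnpos]
    have h5 : (n:ℝ) ^ 2 * ((2:ℝ) ^ n * (2 * (n:ℝ) ^ (-c0)))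
        = 2 ^ n * (2 * (n:ℝ) ^ ((2:ℝ) - c0)) := by
      rw [show (2:ℝ) - c0 = 2 + (-c0) by ring, Real.rpow_add hnpos,
        show ((2:ℝ):ℝ) = ((2:ℕ):ℝ) by norm_num, Real.rpow_natCast]
      ring
    calc (Bad.card : ℝ) ≤ ∑ q ∈ pairs, ((badBJ q.1 q.2).card : ℝ) := h1
      _ ≤ (pairs.card : ℝ) * ((2:ℝ) ^ n * (2 * (n:ℝ) ^ (-c0))) := by rw [← h3]; exact h2
      _ ≤ (n:ℝ) ^ 2 * ((2:ℝ) ^ n * (2 * (n:ℝ) ^ (-c0))) := by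
          apply mul_le_mul_of_nonneg_right h4 (by positivity)
      _ = 2 ^ n * (2 * (n:ℝ) ^ ((2:ℝ) - c0)) := h5
  -- epsilon is small
  set eps : ℝ := 2 * (n:ℝ) ^ ((2:ℝ) - c0) with heps
  have hc0ge : 5 ≤ c0 := by
    have hb2 : (25:ℝ) ≤ (b:ℝ)^2 := by
      have : (5:ℝ) ≤ b := by exact_mod_cast hb
      nlinarith
    have hbe : (1:ℝ) ≤ Real.logb 2 (Real.exp 1) := by
      rw [hlogbe, le_div_iff₀ hlog2pos, one_mul]
      linarith [Real.log_two_lt_d9]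
    rw [hc0]
    nlinarith [hbe, hb2]
  have hepsle : eps ≤ 1/2 := by
    have h1 : (n:ℝ) ^ ((2:ℝ) - c0) ≤ (n:ℝ) ^ (-(3:ℝ)) :=
      Real.rpow_le_rpow_of_exponent_le hn1.le (by linarith)
    have h2 : (n:ℝ) ^ (-(3:ℝ)) ≤ (10:ℝ) ^ (-(3:ℝ)) := by
      apply Real.rpow_le_rpow_of_nonpos (by norm_num) (by exact_mod_cast hn)
        (by norm_num)
    have h3 : (10:ℝ) ^ (-(3:ℝ)) = 1/1000 := by
      rw [show (-(3:ℝ)) = ((-3 : ℤ) : ℝ) by norm_num, Real.rpow_intCast]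
      norm_num
    have h4 : (n:ℝ) ^ ((2:ℝ) - c0) ≤ 1/1000 := by
      rw [← h3]; exact le_trans h1 h2
    rw [heps]
    linarith
  have hepspos : 0 < 1 - eps := by linarith
  have hepsnn : 0 ≤ eps := by positivity
  -- lower bound on G.card
  have hGcard : (2:ℝ) ^ n * (1 - eps) ≤ (G.card : ℝ) := by
    have hcardeq : (G.card : ℝ) = 2 ^ n - (Bad.card : ℝ) := by
      have h' : ((G.card : ℝ) + (Bad.card : ℝ)) = (2:ℝ) ^ n := by exact_mod_cast hsplit
      linarith
    rw [hcardeq]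
    nlinarith [hBadcard]
  have hGpos : (0:ℝ) < (G.card : ℝ) := lt_of_lt_of_le (by positivity) hGcard
  -- logb computation
  have hlogb : (n : ℝ) + Real.logb 2 (1 - eps) ≤ Real.logb 2 (G.card : ℝ) := by
    have h1 : Real.logb 2 ((2:ℝ) ^ n * (1 - eps)) ≤ Real.logb 2 (G.card : ℝ) :=
      Real.logb_le_logb_of_le (by norm_num) (by positivity) hGcard
    have h2 : Real.logb 2 ((2:ℝ) ^ n * (1 - eps))
        = (n : ℝ) + Real.logb 2 (1 - eps) := by
      rw [Real.logb_mul (by positivity) (by linarith), Real.logb_pow,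
        Real.logb_self_eq_one (by norm_num : (1:ℝ) < 2)]
      ring
    linarith
  constructor
  · exact hlogb
  · have h3 : Real.logb 2 (1/2 : ℝ) ≤ Real.logb 2 (1 - eps) :=
      Real.logb_le_logb_of_le (by norm_num) (by norm_num) (by linarith)
    have h4 : Real.logb 2 (1/2 : ℝ) = -1 := by
      rw [show (1/2 : ℝ) = (2:ℝ)⁻¹ by norm_num, Real.logb_inv,
        Real.logb_self_eq_one (by norm_num : (1:ℝ) < 2)]
    linarith
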